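/- arXiv:1509.06274 — 3 statements merged into one kernel-verified Lean document; each statement's English description precedes it below -/
import Mathlib

section
/- Let A, B be self-adjoint operators on a Hilbert space H with A invertible, and let λ_1,...,λ_n be eigenvalues of A such that λ = λ_1⋯λ_n is an isolated eigenvalue of multiplicity 1 of ∧^n A. Suppose v = e_1 ∧ ... ∧ e_n (with e_i unit eigenvectors of A of eigenvalues λ_i) is a common eigenvector of ∧^n A and ∧^n B, with (∧^n B)v = a·v for some a ≠ 0. Then span(e_1,...,e_n) is invariant under B. -/
/-- Let `A, B` be self-adjoint bounded operators on a Hilbert space `H` with `A`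
invertible, and let `lam 1, ..., lam n` be eigenvalues of `A` with orthonormal
unit eigenvectors `e 1, ..., e n`, such that `lam = lam 1 * ... * lam n` is an
isolated eigenvalue of multiplicity `1` of `∧ⁿA` (the operator `AW` induced on a
model `W` of the exterior power `⋀ⁿH`).  Suppose `v = e 1 ∧ ... ∧ e n = ω e` is
a common eigenvector of `∧ⁿA` and `∧ⁿB`, with `(∧ⁿB) v = a • v` for some
`a ≠ 0`.  Then `span (e 1, ..., e n)` is invariant under `B`.  (Here `H` is of
the class `𝓔(H)`: the eigenvectors of `A` span a dense subspace of `H`.) -/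
theorem span_invariant_of_wedge_eigenvector
    {H W : Type*} [NormedAddCommGroup H] [InnerProductSpace ℂ H] [CompleteSpace H]
    [NormedAddCommGroup W] [InnerProductSpace ℂ W]
    (A B : H →L[ℂ] H) (hA : IsSelfAdjoint A) (hB : IsSelfAdjoint B)
    (hAinv : IsUnit A)
    (hbasis : Dense ((Submodule.span ℂ {x : H | ∃ c : ℂ, A x = c • x} : Submodule ℂ H) : Set H))
    {n : ℕ} (e : Fin n → H) (he : Orthonormal ℂ e)
    (lam : Fin n → ℂ) (heig : ∀ i, A (e i) = lam i • e i)
    (ω : AlternatingMap ℂ H W (Fin n))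
    (hGram : ∀ x y : Fin n → H,
      (inner ℂ (ω x) (ω y) : ℂ) = Matrix.det (Matrix.of fun i j => (inner ℂ (x i) (y j) : ℂ)))
    (AW BW : W →L[ℂ] W)
    (hAW : ∀ v : Fin n → H, AW (ω v) = ω (fun i => A (v i)))
    (hBW : ∀ v : Fin n → H, BW (ω v) = ω (fun i => B (v i)))
    (hisol : ∃ U : Set ℂ, IsOpen U ∧ U ∩ spectrum ℂ AW = {∏ i, lam i})
    (hmult : ∀ w : W, AW w = (∏ i, lam i) • w → ∃ c : ℂ, w = c • ω e)
    (a : ℂ) (ha : a ≠ 0) (hBv : BW (ω e) = a • ω e) :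
    ∀ x ∈ Submodule.span ℂ (Set.range e), B x ∈ Submodule.span ℂ (Set.range e) := by
  set K : Submodule ℂ H := Submodule.span ℂ (Set.range e) with hK
  -- the matrix `Y i j = ⟪e i, B e j⟫`
  set Y : Matrix (Fin n) (Fin n) ℂ := Matrix.of fun i j => (inner ℂ (e i) (B (e j)) : ℂ) with hYdef
  have hBωe : ω (fun i => B (e i)) = a • ω e := by rw [← hBW e, hBv]
  -- the Gram matrix of `e` is the identity
  have hGram1 : (Matrix.of fun i j => (inner ℂ (e i) (e j) : ℂ)) = 1 := by
    ext i j
    simp [Matrix.one_apply, orthonormal_iff_ite.mp he i j]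
  -- `det Y = a`
  have hdetY : Y.det = a := by
    have h1 := hGram e (fun i => B (e i))
    rw [hBωe, inner_smul_right, hGram e e, hGram1, Matrix.det_one, mul_one] at h1
    exact h1.symm
  -- key step: any `y ⟂ span e` is orthogonal to each `B (e k)`
  have key : ∀ y ∈ Kᗮ, ∀ k, (inner ℂ y (B (e k)) : ℂ) = 0 := by
    intro y hy
    have hy0 : ∀ k, (inner ℂ y (e k) : ℂ) = 0 := by
      intro k
      have h := hy (e k) (Submodule.subset_span ⟨k, rfl⟩)
      exact inner_eq_zero_symm.mp h
    set w : Fin n → ℂ := fun k => inner ℂ y (B (e k)) with hw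
    have hrow : ∀ j, (Y.updateRow j w).det = 0 := by
      intro j
      have h1 := hGram (Function.update e j y) (fun i => B (e i))
      rw [hBωe, inner_smul_right, hGram (Function.update e j y) e] at h1
      have h4 : (Matrix.of fun i k => (inner ℂ (Function.update e j y i) (e k) : ℂ)).det = 0 := by
        apply Matrix.det_eq_zero_of_row_eq_zero j
        intro k
        simp [Function.update_self, hy0 k]
      have h5 : (Matrix.of fun i k => (inner ℂ (Function.update e j y i) (B (e k)) : ℂ))
          = Y.updateRow j w := by
        ext i k
        by_cases hij : i = j
        · subst hij; simp [Matrix.updateRow_self, hw]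
        · simp [Matrix.updateRow_ne hij, Function.update_of_ne hij, hYdef]
      rw [h4, mul_zero, h5] at h1
      exact h1.symm
    have hcram : Matrix.cramer Y.transpose w = 0 := by
      funext j
      rw [Matrix.cramer_apply, Matrix.updateCol_transpose, Matrix.det_transpose]
      exact hrow j
    have hmv := Matrix.mulVec_cramer Y.transpose w
    rw [hcram, Matrix.mulVec_zero, Matrix.det_transpose, hdetY] at hmv
    have hw0 : w = 0 := by
      rcases smul_eq_zero.mp hmv.symm with h | h
      · exact absurd h ha
      · exact h
    intro k
    exact congrFun hw0 k
  -- hence each `B (e k)` lies in `K`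
  haveI : FiniteDimensional ℂ K := FiniteDimensional.span_of_finite ℂ (Set.finite_range e)
  have hBe : ∀ k, B (e k) ∈ K := by
    intro k
    have hmem : B (e k) ∈ Kᗮᗮ := by
      rw [Submodule.mem_orthogonal]
      intro y hy
      exact key y hy k
    rwa [Submodule.orthogonal_orthogonal] at hmem
  intro x hx
  induction hx using Submodule.span_induction with
  | mem x h => rcases h with ⟨k, rfl⟩; exact hBe k
  | zero => simp [K.zero_mem]
  | add x y hx hy ihx ihy => rw [map_add]; exact K.add_mem ihx ihy
  | smul c x hx ih => rw [map_smul]; exact K.smul_mem c ih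
end

section
/- Let A_1, A_2 be bounded self-adjoint operators on a separable Hilbert space, suppose 1 is an isolated eigenvalue of A_1, and suppose that in some polydisk around (1,0) the proper joint spectrum σ_p(A_1,A_2) coincides with the line {x + y = 1}. Let P_1 be the orthogonal projection onto the eigenspace of A_1 for eigenvalue 1. Then P_1 A_2 P_1 = P_1. -/
open scoped InnerProductSpace

section Aux

variable {H : Type*} [NormedAddCommGroup H] [InnerProductSpace ℂ H] [CompleteSpace H]

/-- For a self-adjoint operator whose whole complex spectrum lies outside the open
ball of radius `m`, we get the lower bound `m * ‖v‖ ≤ ‖S v‖`. -/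
lemma aux_norm_lower_bound_residue [Nontrivial H] {S : H →L[ℂ] H} (hS : IsSelfAdjoint S)
    {m : ℝ} (hm : 0 ≤ m) (hσ : ∀ z ∈ spectrum ℂ S, m ≤ ‖z‖) (v : H) :
    m * ‖v‖ ≤ ‖S v‖ := by
  set T : H →L[ℂ] H := S ^ 2 - algebraMap ℂ (H →L[ℂ] H) ((m : ℂ) ^ 2) with hT
  have hTsa : IsSelfAdjoint T := by
    refine (hS.pow 2).sub ?_
    rw [IsSelfAdjoint, Algebra.algebraMap_eq_smul_one, star_smul, star_one]
    congr 1
    simp [Complex.star_def, Complex.conj_ofReal]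
  have hTnn : (0 : H →L[ℂ] H) ≤ T := by
    rw [StarOrderedRing.nonneg_iff_spectrum_nonneg (R := ℝ) T hTsa]
    intro x hx
    have hx' : (x : ℂ) ∈ spectrum ℂ T := by
      have := spectrum.algebraMap_mem ℂ hx
      simpa using this
    rw [hT, ← spectrum.sub_singleton_eq] at hx'
    obtain ⟨y, hy, c, hc, hyc⟩ := Set.mem_sub.mp hx'
    rw [Set.mem_singleton_iff] at hc
    subst hc
    rw [spectrum.map_pow] at hy
    obtain ⟨z, hz, rfl⟩ := hy
    have hzre := hS.mem_spectrum_eq_re hz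
    have hmz := hσ z hz
    rw [hzre] at hmz hyc
    rw [Complex.norm_real] at hmz
    have : ((z.re ^ 2 - m ^ 2 : ℝ) : ℂ) = (x : ℂ) := by push_cast; rw [← hyc]
    have hx2 : x = z.re ^ 2 - m ^ 2 := by exact_mod_cast this.symm
    have : m ^ 2 ≤ z.re ^ 2 := by
      have := sq_le_sq' (by linarith [abs_nonneg z.re, neg_abs_le z.re] : -|z.re| ≤ m) hmz
      simpa [sq_abs] using this
    linarith
  have hTpos := (ContinuousLinearMap.nonneg_iff_isPositive T).mp hTnn
  have h1 : 0 ≤ Complex.re ⟪T v, v⟫_ℂ := (Complex.le_def.mp (hTpos.inner_nonneg_left v)).1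
  have hTv : T v = S (S v) - ((m:ℂ)^2) • v := by
    simp [hT, Algebra.algebraMap_eq_smul_one, pow_two, ContinuousLinearMap.mul_apply]
  have hsym := ContinuousLinearMap.isSelfAdjoint_iff_isSymmetric.mp hS
  have hsS : ∀ x y : H, ⟪S x, y⟫_ℂ = ⟪x, S y⟫_ℂ := fun x y => hsym x y
  have h2 : ⟪T v, v⟫_ℂ = ((‖S v‖^2 - m^2 * ‖v‖^2 : ℝ) : ℂ) := by
    rw [hTv, inner_sub_left, inner_smul_left, hsS (S v) v,
      inner_self_eq_norm_sq_to_K, inner_self_eq_norm_sq_to_K, map_pow, Complex.conj_ofReal]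
    push_cast
    abel
  rw [h2, Complex.ofReal_re] at h1
  nlinarith [norm_nonneg (S v), norm_nonneg v, mul_nonneg hm (norm_nonneg v)]

set_option linter.unusedSectionVars false in
/-- Localization of the spectrum of the pencil `A₁ + t A₂ - (1+t+s)` coming from the
hypothesis that the joint spectrum is locally the line `x + y = 1`. -/
lemma aux_spec_bound_residue (A₁ A₂ : H →L[ℂ] H) {ρ : ℝ} (hρ : 0 < ρ)
    (hline : ∀ x y : ℂ, ‖x - 1‖ < ρ → ‖y‖ < ρ →
      (¬ IsUnit (x • A₁ + y • A₂ - 1) ↔ x + y = 1))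
    {t s : ℝ} (ht : |t| ≤ min ρ 1 / 16) (hs : |s| ≤ min ρ 1 / 16) :
    ∀ z ∈ spectrum ℂ (A₁ + (t:ℂ) • A₂ - (((1+t+s : ℝ)):ℂ) • 1), |s| ≤ ‖z‖ := by
  set ε : ℝ := min ρ 1 / 16 with hε
  have hε0 : 0 < ε := by positivity
  have hερ : ε ≤ ρ / 16 := by
    have := min_le_left ρ 1; rw [hε]; linarith
  have hε1 : ε ≤ 1 / 16 := by
    have := min_le_right ρ 1; rw [hε]; linarith
  intro z hz
  by_contra hlt
  push_neg at hlt
  set c : ℂ := ((1+t+s : ℝ) : ℂ) with hc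
  set d : ℂ := c + z with hd
  have hd1 : ‖d - 1‖ ≤ 3 * ε := by
    have h : d - 1 = (t:ℂ) + ((s:ℂ) + z) := by rw [hd, hc]; push_cast; ring
    rw [h]
    calc ‖(t:ℂ) + ((s:ℂ) + z)‖ ≤ ‖(t:ℂ)‖ + (‖(s:ℂ)‖ + ‖z‖) :=
          le_trans (norm_add_le _ _) (by gcongr; exact norm_add_le _ _)
      _ ≤ ε + (ε + ε) := by
        rw [Complex.norm_real, Complex.norm_real]
        gcongr
        · exact ht
        · exact hs
        · exact le_trans hlt.le hs
      _ = 3 * ε := by ring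
  have hdn : (3:ℝ)/4 ≤ ‖d‖ := by
    have h1 : ‖(1:ℂ)‖ - ‖d - 1‖ ≤ ‖d‖ := by
      have := norm_sub_norm_le (1:ℂ) (1 - d)
      simpa [norm_sub_rev] using this
    rw [norm_one] at h1
    nlinarith
  have hd0 : d ≠ 0 := by
    intro h; rw [h, norm_zero] at hdn; norm_num at hdn
  have hnu : ¬ IsUnit (A₁ + (t:ℂ) • A₂ - d • 1) := by
    rw [spectrum.mem_iff] at hz
    intro hu
    apply hz
    have heq : algebraMap ℂ (H →L[ℂ] H) z - (A₁ + (t:ℂ) • A₂ - c • 1)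
        = -(A₁ + (t:ℂ) • A₂ - d • 1) := by
      rw [Algebra.algebraMap_eq_smul_one, hd, add_smul]
      abel
    rw [heq]
    exact hu.neg
  have hx1 : ‖d⁻¹ - 1‖ < ρ := by
    have h : d⁻¹ - 1 = (1 - d) / d := by field_simp
    rw [h, norm_div, norm_sub_rev]
    have : ‖d - 1‖ / ‖d‖ ≤ 3 * ε / (3/4) :=
      div_le_div₀ (by positivity) hd1 (by norm_num) hdn
    calc ‖d - 1‖ / ‖d‖ ≤ 3 * ε / (3/4) := this
      _ = 4 * ε := by ring
      _ ≤ 4 * (ρ/16) := by gcongr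
      _ < ρ := by linarith
  have hx2 : ‖(t:ℂ) / d‖ < ρ := by
    rw [norm_div, Complex.norm_real]
    calc |t| / ‖d‖ ≤ ε / (3/4) := div_le_div₀ (by positivity) ht (by norm_num) hdn
      _ = (4/3) * ε := by ring
      _ ≤ (4/3) * (ρ/16) := by gcongr
      _ < ρ := by linarith
  have key : ¬ IsUnit (d⁻¹ • A₁ + ((t:ℂ)/d) • A₂ - 1) := by
    intro hu
    apply hnu
    have heq : A₁ + (t:ℂ) • A₂ - d • 1 = d • (d⁻¹ • A₁ + ((t:ℂ)/d) • A₂ - 1) := by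
      rw [smul_sub, smul_add, smul_smul, smul_smul, mul_inv_cancel₀ hd0,
        mul_div_cancel₀ _ hd0, one_smul]
    rw [heq, Algebra.smul_def]
    exact ((isUnit_iff_ne_zero.mpr hd0).map (algebraMap ℂ (H →L[ℂ] H))).mul hu
  have hsum := (hline d⁻¹ ((t:ℂ)/d) hx1 hx2).mp key
  rw [inv_eq_one_div, ← add_div, div_eq_one_iff_eq hd0] at hsum
  have hzval : z = -(s:ℂ) := by
    have h2 : (1:ℂ) + (t:ℂ) = ((1+t+s:ℝ):ℂ) + z := by rw [hsum, hd, hc]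
    push_cast at h2
    linear_combination -h2
  rw [hzval, norm_neg, Complex.norm_real] at hlt
  exact lt_irrefl _ hlt

/-- Step B: for an eigenvector `u` of `A₁` with eigenvalue `1`, `⟪A₂ u - u, u⟫ = 0`. -/
lemma aux_eigvec_inner_residue [Nontrivial H]
    (A₁ A₂ : H →L[ℂ] H) (hA₁ : IsSelfAdjoint A₁) (hA₂ : IsSelfAdjoint A₂)
    {ρ : ℝ} (hρ : 0 < ρ)
    (hline : ∀ x y : ℂ, ‖x - 1‖ < ρ → ‖y‖ < ρ →
      (¬ IsUnit (x • A₁ + y • A₂ - 1) ↔ x + y = 1))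
    (u : H) (hu : A₁ u = u) : ⟪A₂ u - u, u⟫_ℂ = 0 := by
  have aux_spec : ∀ {t s : ℝ}, |t| ≤ min ρ 1 / 16 → |s| ≤ min ρ 1 / 16 →
      ∀ z ∈ spectrum ℂ (A₁ + (t:ℂ) • A₂ - (((1+t+s : ℝ)):ℂ) • 1), |s| ≤ ‖z‖ :=
    fun ht hs => aux_spec_bound_residue A₁ A₂ hρ hline ht hs
  set ε : ℝ := min ρ 1 / 16 with hε
  have hε0 : 0 < ε := by positivity
  set w : H := A₂ u - u with hw
  have hsymA₂ := ContinuousLinearMap.isSelfAdjoint_iff_isSymmetric.mp hA₂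
  have hA2real : (starRingEnd ℂ) ⟪A₂ u, u⟫_ℂ = ⟪A₂ u, u⟫_ℂ := by
    rw [inner_conj_symm]
    exact (hsymA₂ u u).symm
  have him : (⟪w, u⟫_ℂ).im = 0 := by
    rw [hw, inner_sub_left]
    have h1 : (⟪A₂ u, u⟫_ℂ).im = 0 := Complex.conj_eq_iff_im.mp hA2real
    have h2 : (⟪u, u⟫_ℂ).im = 0 := by
      rw [inner_self_eq_norm_sq_to_K]
      simp [← Complex.ofReal_pow]
    rw [Complex.sub_im, h1, h2, sub_zero]
  set r : ℝ := (⟪w, u⟫_ℂ).re with hr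
  have hre : r = 0 := by
    by_contra hr0
    have habsr : 0 < |r| := abs_pos.mpr hr0
    set s : ℝ := if 0 ≤ r then ε else -ε with hs
    have hsabs : |s| = ε := by
      rw [hs]; split <;> simp [abs_of_pos hε0, abs_of_neg, hε0, abs_of_nonneg hε0.le]
    have hsr : s * r = ε * |r| := by
      rw [hs]; split
      · rename_i h; rw [abs_of_nonneg h]
      · rename_i h; push_neg at h; rw [abs_of_neg h]; ring
    have hineq : ∀ t : ℝ, 0 < t → t ≤ ε → 2 * (t * (ε * |r|)) ≤ t^2 * ‖w‖^2 := by
      intro t ht0 htε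
      have htabs : |t| ≤ ε := by rw [abs_of_pos ht0]; exact htε
      have hsabs' : |s| ≤ ε := le_of_eq hsabs
      set S : H →L[ℂ] H := A₁ + (t:ℂ) • A₂ - (((1+t+s : ℝ)):ℂ) • 1 with hS
      have hSsa : IsSelfAdjoint S := by
        refine (hA₁.add ?_).sub ?_
        · rw [IsSelfAdjoint, star_smul, Complex.star_def, Complex.conj_ofReal, hA₂.star_eq]
        · rw [IsSelfAdjoint, star_smul, Complex.star_def, Complex.conj_ofReal,
            star_one]
      have hSu : S u = (t:ℂ) • w - (s:ℂ) • u := by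
        simp only [hS, ContinuousLinearMap.sub_apply, ContinuousLinearMap.add_apply,
          ContinuousLinearMap.coe_smul', Pi.smul_apply, ContinuousLinearMap.one_apply, hu, hw]
        push_cast
        module
      have hb := aux_norm_lower_bound_residue hSsa (abs_nonneg s) (aux_spec htabs hsabs') u
      rw [hSu] at hb
      have hb2 : (|s| * ‖u‖)^2 ≤ ‖(t:ℂ) • w - (s:ℂ) • u‖^2 := by
        have h0 : 0 ≤ |s| * ‖u‖ := by positivity
        nlinarith [norm_nonneg ((t:ℂ) • w - (s:ℂ) • u)]
      rw [@norm_sub_sq ℂ] at hb2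
      rw [inner_smul_left, inner_smul_right, norm_smul, norm_smul] at hb2
      simp only [Complex.star_def, Complex.conj_ofReal, Complex.norm_real,
        RCLike.re_to_complex, Complex.mul_re, Complex.ofReal_re, Complex.ofReal_im,
        Complex.mul_im, Real.norm_eq_abs, ← hr] at hb2
      have hb3 : 2 * (t * (s * r)) ≤ t^2 * ‖w‖^2 := by
        nlinarith [sq_abs s, sq_abs t, sq_nonneg ‖u‖]
      rw [hsr] at hb3
      linarith
    set t : ℝ := min ε (ε * |r| / (‖w‖^2 + 1)) with ht
    have ht0 : 0 < t := lt_min hε0 (by positivity)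
    have h := hineq t ht0 (min_le_left _ _)
    have ht2 : t ≤ ε * |r| / (‖w‖^2 + 1) := min_le_right _ _
    have ht3 : t * (‖w‖^2 + 1) ≤ ε * |r| := by
      rw [← le_div_iff₀ (by positivity)]
      exact ht2
    nlinarith [mul_le_mul_of_nonneg_left ht3 ht0.le, sq_nonneg t,
      mul_pos ht0 (mul_pos hε0 habsr)]
  exact Complex.ext (by simp [← hr, hre]) (by simp [him])

end Aux

/-- Let `A₁, A₂` be bounded self-adjoint operators on a separable Hilbert space,
let `1` be an isolated eigenvalue of `A₁`, and suppose that in some polydisk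
around `(1,0)` the proper joint spectrum `σ_p(A₁,A₂)` coincides with the line
`{x + y = 1}`.  If `P` is the orthogonal projection onto the eigenspace
`ker (A₁ - I)` (i.e. a self-adjoint idempotent with range `ker (A₁ - I)`), then
`P A₂ P = P`. -/
theorem residue_line_in_spectrum
    {H : Type*} [NormedAddCommGroup H] [InnerProductSpace ℂ H] [CompleteSpace H]
    [TopologicalSpace.SeparableSpace H]
    (A₁ A₂ : H →L[ℂ] H) (hA₁ : IsSelfAdjoint A₁) (hA₂ : IsSelfAdjoint A₂)
    (heig : LinearMap.ker ((A₁ - 1 : H →L[ℂ] H) : H →ₗ[ℂ] H) ≠ ⊥)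
    (hisol : ∃ U : Set ℂ, IsOpen U ∧ U ∩ spectrum ℂ A₁ = {1})
    (hline : ∃ ρ : ℝ, 0 < ρ ∧ ∀ x y : ℂ, ‖x - 1‖ < ρ → ‖y‖ < ρ →
      (¬ IsUnit (x • A₁ + y • A₂ - 1) ↔ x + y = 1))
    (P : H →L[ℂ] H) (hPidem : P ∘L P = P) (hPsa : IsSelfAdjoint P)
    (hPran : LinearMap.range (P : H →ₗ[ℂ] H) = LinearMap.ker ((A₁ - 1 : H →L[ℂ] H) : H →ₗ[ℂ] H)) :
    P ∘L A₂ ∘L P = P := by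
  rcases subsingleton_or_nontrivial H with hH | hH
  · exact Subsingleton.elim _ _
  obtain ⟨ρ, hρ, hline⟩ := hline
  have stepB : ∀ u : H, A₁ u = u → ⟪A₂ u - u, u⟫_ℂ = 0 :=
    fun u hu => aux_eigvec_inner_residue A₁ A₂ hA₁ hA₂ hρ hline u hu
  have hsymP' := ContinuousLinearMap.isSelfAdjoint_iff_isSymmetric.mp hPsa
  have hsymP : ∀ a b : H, ⟪P a, b⟫_ℂ = ⟪a, P b⟫_ℂ := fun a b => hsymP' a b
  have key : ∀ x : H, ⟪(P ∘L A₂ ∘L P - P) x, x⟫_ℂ = 0 := by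
    intro x
    have hux : A₁ (P x) = P x := by
      have hmem : P x ∈ LinearMap.range (P : H →ₗ[ℂ] H) := ⟨x, rfl⟩
      rw [hPran, LinearMap.mem_ker] at hmem
      have : A₁ (P x) - P x = 0 := by
        simpa [ContinuousLinearMap.sub_apply] using hmem
      exact sub_eq_zero.mp this
    have hPPx : P (P x) = P x := by
      rw [← ContinuousLinearMap.comp_apply, hPidem]
    simp only [ContinuousLinearMap.sub_apply, ContinuousLinearMap.comp_apply, inner_sub_left]
    rw [hsymP (A₂ (P x)) x]
    have hPx : ⟪P x, x⟫_ℂ = ⟪P x, P x⟫_ℂ := by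
      conv_lhs => rw [← hPPx]
      exact hsymP (P x) x
    rw [hPx, ← inner_sub_left]
    exact stepB (P x) hux
  have hQ : ((P ∘L A₂ ∘L P - P : H →L[ℂ] H) : H →ₗ[ℂ] H) = 0 :=
    (inner_map_self_eq_zero _).mp key
  have : (P ∘L A₂ ∘L P - P : H →L[ℂ] H) = 0 := by
    ext x
    have := LinearMap.congr_fun hQ x
    simpa using this
  exact sub_eq_zero.mp this
end

section
/- Let A_1, A_2 be bounded self-adjoint operators with A_1 invertible and 1 an isolated eigenvalue of A_1. Let P_1 be the orthogonal projection onto ker(A_1 − I), E the spectral measure of A_1, T = ∫_{σ(A_1)∖{1}} (z−1)^{−1} dE(z), and T̃ = ∫_{σ(A_1)∖{1}} z(1−z)^{−1} dE(z). If P_1 A_2 T A_2 P_1 = 0 and P_1 A_2 T̃ A_2 P_1 = 0, then the eigenspace ker(A_1 − I) is invariant under A_2. -/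
/-- Let `A₁, A₂` be bounded self-adjoint operators with `A₁` invertible and `1`
an isolated eigenvalue of `A₁`.  Let `P` be the orthogonal projection onto
`ker (A₁ - I)`, and let `T = ∫_{σ(A₁)∖{1}} (z-1)⁻¹ dE(z)` and
`T̃ = ∫_{σ(A₁)∖{1}} z (1-z)⁻¹ dE(z)` be the operators from the functional
calculus of `A₁` (characterized here by: they are self-adjoint, commute with
`A₁`, vanish on the range of `P`, have range orthogonal to the range of `P`,
and satisfy `(A₁ - 1) T = 1 - P` and `(1 - A₁) T̃ = A₁ (1 - P)`).  If
`P A₂ T A₂ P = 0` and `P A₂ T̃ A₂ P = 0`, then `ker (A₁ - I)` is invariant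
under `A₂`. -/
theorem vanishing_residues_eigenspace_invariant
    {H : Type*} [NormedAddCommGroup H] [InnerProductSpace ℂ H] [CompleteSpace H]
    (A₁ A₂ : H →L[ℂ] H) (hA₁ : IsSelfAdjoint A₁) (hA₂ : IsSelfAdjoint A₂)
    (hA₁inv : IsUnit A₁)
    (heig : LinearMap.ker ((A₁ - 1 : H →L[ℂ] H) : H →ₗ[ℂ] H) ≠ ⊥)
    (hisol : ∃ U : Set ℂ, IsOpen U ∧ U ∩ spectrum ℂ A₁ = {1})
    (P : H →L[ℂ] H) (hPidem : P ∘L P = P) (hPsa : IsSelfAdjoint P)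
    (hPran : LinearMap.range (P : H →ₗ[ℂ] H) = LinearMap.ker ((A₁ - 1 : H →L[ℂ] H) : H →ₗ[ℂ] H))
    (T T' : H →L[ℂ] H) (hTsa : IsSelfAdjoint T) (hT'sa : IsSelfAdjoint T')
    (hTcomm : T ∘L A₁ = A₁ ∘L T) (hT'comm : T' ∘L A₁ = A₁ ∘L T')
    (hTP : T ∘L P = 0) (hPT : P ∘L T = 0)
    (hT'P : T' ∘L P = 0) (hPT' : P ∘L T' = 0)
    (hT : (A₁ - 1) ∘L T = 1 - P)
    (hT' : (1 - A₁) ∘L T' = A₁ ∘L (1 - P))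
    (hres1 : P ∘L A₂ ∘L T ∘L A₂ ∘L P = 0)
    (hres2 : P ∘L A₂ ∘L T' ∘L A₂ ∘L P = 0) :
    ∀ v ∈ LinearMap.ker ((A₁ - 1 : H →L[ℂ] H) : H →ₗ[ℂ] H), A₂ v ∈ LinearMap.ker ((A₁ - 1 : H →L[ℂ] H) : H →ₗ[ℂ] H) := by
  simp only [← ContinuousLinearMap.mul_def] at hPidem hPT hPT' hT hT' hres1 hres2
  -- P fixes elements of its range
  have hPfix : ∀ x : H, x ∈ LinearMap.range (P : H →ₗ[ℂ] H) → P x = x := by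
    rintro x ⟨y, rfl⟩
    have := congrArg (fun (B : H →L[ℂ] H) => B y) hPidem
    simpa using this
  -- step 1 : T + T' + (1 - P) = 0
  have hk : (A₁ - 1) * (T + T' + (1 - P)) = 0 := by
    have e : (A₁ - 1) * (T + T' + (1 - P))
        = (A₁ - 1) * T - ((1 - A₁) * T' - A₁ * (1 - P)) + ((A₁ - 1) * (1 - P) - A₁ * (1 - P)) := by
      noncomm_ring
    rw [e, hT, hT']
    noncomm_ring
  have hPk : P * (T + T' + (1 - P)) = 0 := by
    have e : P * (T + T' + (1 - P)) = P * T + P * T' + (P - P * P) := by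
      noncomm_ring
    rw [e, hPT, hPT', hPidem]
    simp
  have hsum : T + T' + (1 - P) = 0 := by
    ext x
    have h1 : (A₁ - 1) ((T + T' + (1 - P)) x) = 0 := by
      have := congrArg (fun (B : H →L[ℂ] H) => B x) hk
      simpa [ContinuousLinearMap.mul_apply] using this
    have hmem : (T + T' + (1 - P)) x ∈ LinearMap.range (P : H →ₗ[ℂ] H) := by
      rw [hPran]; exact LinearMap.mem_ker.mpr h1
    have h2 : P ((T + T' + (1 - P)) x) = 0 := by
      have := congrArg (fun (B : H →L[ℂ] H) => B x) hPk
      simpa [ContinuousLinearMap.mul_apply] using this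
    have := hPfix _ hmem
    simp only [ContinuousLinearMap.zero_apply]
    rw [← this, h2]
  have hQ : (1 : H →L[ℂ] H) - P = -(T + T') := by
    have : T + T' = -(1 - P) := by linear_combination (norm := abel) hsum
    rw [this, neg_neg]
  -- step 2 : P A₂ (1-P) A₂ P = 0
  have hkey : P * A₂ * ((1 : H →L[ℂ] H) - P) * A₂ * P = 0 := by
    rw [hQ]
    have e : P * A₂ * (-(T + T')) * A₂ * P
        = -(P * (A₂ * (T * (A₂ * P)))) - P * (A₂ * (T' * (A₂ * P))) := by
      noncomm_ring
    rw [e, hres1, hres2]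
    simp
  -- step 3 : conclude
  intro v hv
  have hvmem : v ∈ LinearMap.range (P : H →ₗ[ℂ] H) := by rw [hPran]; exact hv
  have hPv : P v = v := hPfix v hvmem
  -- self-adjointness of 1 - P
  have hQsa : IsSelfAdjoint ((1 : H →L[ℂ] H) - P) := by
    rw [IsSelfAdjoint, star_sub, star_one, hPsa]
  set Q : H →L[ℂ] H := (1 : H →L[ℂ] H) - P with hQdef
  have hQadj : ContinuousLinearMap.adjoint Q = Q :=
    ContinuousLinearMap.isSelfAdjoint_iff'.mp hQsa
  have hPadj : ContinuousLinearMap.adjoint P = P :=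
    ContinuousLinearMap.isSelfAdjoint_iff'.mp hPsa
  have hA₂adj : ContinuousLinearMap.adjoint A₂ = A₂ :=
    ContinuousLinearMap.isSelfAdjoint_iff'.mp hA₂
  have hQidem : Q * Q = Q := by
    rw [hQdef]
    have e : ((1 : H →L[ℂ] H) - P) * (1 - P) = 1 - P - P + P * P := by noncomm_ring
    rw [e, hPidem]; abel
  have swap : ∀ (B : H →L[ℂ] H), ContinuousLinearMap.adjoint B = B →
      ∀ x y : H, (inner ℂ (B x) y : ℂ) = inner ℂ x (B y) := by
    intro B hB x y
    nth_rewrite 1 [← hB]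
    exact ContinuousLinearMap.adjoint_inner_left B y x
  have hinner : (inner ℂ (Q (A₂ v)) (Q (A₂ v)) : ℂ) = 0 := by
    calc (inner ℂ (Q (A₂ v)) (Q (A₂ v)) : ℂ)
        = inner ℂ (A₂ v) (Q (Q (A₂ v))) := swap Q hQadj _ _
      _ = inner ℂ (A₂ v) (Q (A₂ v)) := by
          have := congrArg (fun (B : H →L[ℂ] H) => B (A₂ v)) hQidem
          simp only [ContinuousLinearMap.mul_apply] at this
          rw [this]
      _ = inner ℂ v (A₂ (Q (A₂ v))) := swap A₂ hA₂adj _ _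
      _ = inner ℂ (P v) (A₂ (Q (A₂ (P v)))) := by rw [hPv]
      _ = inner ℂ v (P (A₂ (Q (A₂ (P v))))) := swap P hPadj _ _
      _ = inner ℂ v ((P * A₂ * Q * A₂ * P) v) := by
          simp [ContinuousLinearMap.mul_apply]
      _ = 0 := by rw [hkey]; simp
  have hQ0 : Q (A₂ v) = 0 := inner_self_eq_zero.mp hinner
  have : P (A₂ v) = A₂ v := by
    have h : A₂ v - P (A₂ v) = 0 := by
      simpa [hQdef, ContinuousLinearMap.sub_apply] using hQ0
    exact (sub_eq_zero.mp h).symm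
  rw [← hPran]
  exact ⟨A₂ v, this⟩
end
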